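/- Every path P = v₁v₂…vₙ with at least 5 edges admits a proper orientation with maximum in-degree at most 2 such that d⁻(v₁)=0, d⁻(v₂)=1, d⁻(v_{n−2})=0, d⁻(v_{n−1})=2, and d⁻(vₙ)=0. -/

import Mathlib

open SimpleGraph

/-- `D` is an orientation of `G`: each edge gets exactly one direction. -/
def IsOrientation {V : Type*} (G : SimpleGraph V) (D : V → V → Prop) : Prop :=
  (∀ u v, G.Adj u v ↔ (D u v ∨ D v u)) ∧ ∀ u v, ¬(D u v ∧ D v u)

/-- In-degree of `v` in the orientation `D`. -/
noncomputable def inDeg {V : Type*} (D : V → V → Prop) (v : V) : ℕ :=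
  Nat.card {u : V // D u v}

/-- An orientation is proper if adjacent vertices have distinct in-degrees. -/
def IsProper {V : Type*} (G : SimpleGraph V) (D : V → V → Prop) : Prop :=
  ∀ u v, G.Adj u v → inDeg D u ≠ inDeg D v


/-- direction of edge i—(i+1): true means i → i+1 -/
def xprop (n i : ℕ) : Prop := (i + 4 < n ∧ i % 3 ≠ 2) ∨ (¬ (i + 4 < n) ∧ i + 3 = n)

instance xprop.dec (n i : ℕ) : Decidable (xprop n i) := by unfold xprop; infer_instance

def Dor (n : ℕ) (u v : Fin n) : Prop :=
  (u.val + 1 = v.val ∧ xprop n u.val) ∨ (v.val + 1 = u.val ∧ ¬ xprop n v.val)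

def eval (n i : ℕ) : ℕ :=
  if i + 1 = n then 0 else if i + 2 = n then 2 else if i + 3 = n then 0
  else if i + 4 = n then (if n % 3 = 1 then 1 else 2) else i % 3

lemma inDeg_Dor (n : ℕ) (i : ℕ) (hi : i < n) :
    inDeg (Dor n) ⟨i, hi⟩ =
      (if 0 < i ∧ xprop n (i-1) then 1 else 0) +
      (if i + 1 < n ∧ ¬ xprop n i then 1 else 0) := by
  classical
  have key : inDeg (Dor n) ⟨i, hi⟩ = ({u : Fin n | Dor n u ⟨i, hi⟩}).ncard := by
    rw [inDeg, ← Nat.card_coe_set_eq]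
    rfl
  rw [key]
  by_cases h1 : 0 < i ∧ xprop n (i-1) <;> by_cases h2 : i + 1 < n ∧ ¬ xprop n i
  · have hset : {u : Fin n | Dor n u ⟨i, hi⟩} =
        {(⟨i-1, by omega⟩ : Fin n), ⟨i+1, by omega⟩} := by
      ext u
      have hu := u.isLt
      simp only [Set.mem_setOf_eq, Dor, Set.mem_insert_iff, Set.mem_singleton_iff, Fin.ext_iff]
      constructor
      · rintro (⟨h, -⟩ | ⟨h, -⟩)
        · left; omega
        · right; omega
      · rintro (h | h)
        · exact Or.inl ⟨by omega, by rw [show u.val = i - 1 from h]; exact h1.2⟩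
        · exact Or.inr ⟨by omega, h2.2⟩
    rw [hset, Set.ncard_pair (by simp only [ne_eq, Fin.ext_iff]; omega), if_pos h1, if_pos h2]
  · have hset : {u : Fin n | Dor n u ⟨i, hi⟩} = {(⟨i-1, by omega⟩ : Fin n)} := by
      ext u
      have hu := u.isLt
      simp only [Set.mem_setOf_eq, Dor, Set.mem_singleton_iff, Fin.ext_iff]
      constructor
      · rintro (⟨h, -⟩ | ⟨h, hx⟩)
        · omega
        · exact absurd ⟨by omega, hx⟩ h2
      · intro h
        exact Or.inl ⟨by omega, by rw [show u.val = i - 1 from h]; exact h1.2⟩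
    rw [hset, Set.ncard_singleton, if_pos h1, if_neg h2]
  · have hset : {u : Fin n | Dor n u ⟨i, hi⟩} = {(⟨i+1, by omega⟩ : Fin n)} := by
      ext u
      have hu := u.isLt
      simp only [Set.mem_setOf_eq, Dor, Set.mem_singleton_iff, Fin.ext_iff]
      constructor
      · rintro (⟨h, hx⟩ | ⟨h, -⟩)
        · exact absurd ⟨by omega, by rwa [show u.val = i - 1 by omega] at hx⟩ h1
        · omega
      · intro h
        exact Or.inr ⟨by omega, h2.2⟩
    rw [hset, Set.ncard_singleton, if_neg h1, if_pos h2]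
  · have hset : {u : Fin n | Dor n u ⟨i, hi⟩} = (∅ : Set (Fin n)) := by
      ext u
      have hu := u.isLt
      simp only [Set.mem_setOf_eq, Dor, Set.mem_empty_iff_false, iff_false]
      rintro (⟨h, hx⟩ | ⟨h, hx⟩)
      · exact absurd ⟨by omega, by rwa [show u.val = i - 1 by omega] at hx⟩ h1
      · exact absurd ⟨by omega, hx⟩ h2
    rw [hset, Set.ncard_empty, if_neg h1, if_neg h2]

lemma inDeg_eq_eval (n : ℕ) (hn : 6 ≤ n) (v : Fin n) :
    inDeg (Dor n) v = eval n v.val := by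
  obtain ⟨i, hi⟩ := v
  rw [inDeg_Dor n i hi]
  simp only [eval]
  split_ifs <;> simp only [xprop] at * <;> omega

/-- Lemma 1(1): a path with at least 5 edges (`n ≥ 6` vertices). -/
theorem path_orientation_ge5 (n : ℕ) (hn : 6 ≤ n) :
    ∃ D : Fin n → Fin n → Prop,
      IsOrientation (SimpleGraph.pathGraph n) D ∧
      IsProper (SimpleGraph.pathGraph n) D ∧
      (∀ v, inDeg D v ≤ 2) ∧
      inDeg D ⟨0, by omega⟩ = 0 ∧ inDeg D ⟨1, by omega⟩ = 1 ∧
      inDeg D ⟨n - 3, by omega⟩ = 0 ∧ inDeg D ⟨n - 2, by omega⟩ = 2 ∧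
      inDeg D ⟨n - 1, by omega⟩ = 0 := by
  refine ⟨Dor n, ⟨?_, ?_⟩, ?_, ?_, ?_, ?_, ?_, ?_, ?_⟩
  · intro u v
    rw [SimpleGraph.pathGraph_adj]
    simp only [Dor]
    tauto
  · intro u v
    rintro ⟨h1 | h1, h2 | h2⟩ <;>
      obtain ⟨a, b⟩ := h1 <;> obtain ⟨c, d⟩ := h2 <;>
      first | omega | exact d b | exact b d
  · intro u v hadj
    rw [SimpleGraph.pathGraph_adj] at hadj
    rw [inDeg_eq_eval n hn u, inDeg_eq_eval n hn v]
    have hu := u.isLt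
    have hv := v.isLt
    simp only [eval]
    split_ifs <;> omega
  all_goals first
    | (intro v
       rw [inDeg_eq_eval n hn v]
       have hv := v.isLt
       simp only [eval]
       split_ifs <;> omega)
    | (rw [inDeg_eq_eval n hn]
       simp only [eval]
       split_ifs <;> omega)
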